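/- Let n ≥ 2 and ε, φ ∈ ℝ with either |ε| ≤ 1 < |φ| or |φ| ≤ 1 < |ε|. Then at least n − 1 of the n eigenvalues of T_{n,ε,φ} belong to the interval [−2, 2]; that is, T_{n,ε,φ} has at most one eigenvalue outside [−2, 2]. -/

import Mathlib

open Matrix Real Filter

/-- The n×n tridiagonal matrix `T_{n,ε,φ}` with `(T)_{11} = ε`, `(T)_{nn} = φ`,
zero elsewhere on the diagonal, and ones on the first super- and subdiagonals. -/
noncomputable def Ttri (n : ℕ) (e f : ℝ) : Matrix (Fin n) (Fin n) ℝ :=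
  fun i j =>
    if i = j then (if (i : ℕ) = 0 then e else if (i : ℕ) = n - 1 then f else 0)
    else if (i : ℕ) + 1 = (j : ℕ) ∨ (j : ℕ) + 1 = (i : ℕ) then 1 else 0

lemma Ttri_decomp (m : ℕ) (e f : ℝ) (i j : Fin (m+2)) :
    Ttri (m+2) e f i j =
      (if i = j then (if (i:ℕ) = 0 then e else if (i:ℕ) = m+1 then f else 0) else 0)
      + (if (i:ℕ)+1 = (j:ℕ) then 1 else 0) + (if (j:ℕ)+1 = (i:ℕ) then 1 else 0) := by
  rcases i with ⟨i, hi⟩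
  rcases j with ⟨j, hj⟩
  simp only [Ttri, Fin.mk.injEq, Fin.ext_iff]
  split_ifs <;> first | ring1 | (exfalso; omega)

lemma quad_eq (m : ℕ) (e f : ℝ) (x : Fin (m+2) → ℝ) :
    x ⬝ᵥ (Ttri (m+2) e f).mulVec x
      = e * x 0 ^ 2 + f * x (Fin.last (m+1)) ^ 2
        + 2 * ∑ i : Fin (m+1), x i.castSucc * x i.succ := by
  have hD : ∑ i : Fin (m+2), ∑ j : Fin (m+2),
      x i * ((if i = j then (if (i:ℕ) = 0 then e else if (i:ℕ) = m+1 then f else 0) else 0) * x j)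
      = e * x 0 ^ 2 + f * x (Fin.last (m+1)) ^ 2 := by
    have h1 : ∀ i : Fin (m+2), ∑ j : Fin (m+2),
        x i * ((if i = j then (if (i:ℕ) = 0 then e else if (i:ℕ) = m+1 then f else 0) else 0) * x j)
        = (if (i:ℕ) = 0 then e else if (i:ℕ) = m+1 then f else 0) * x i ^ 2 := by
      intro i
      rw [Finset.sum_eq_single i]
      · rw [if_pos rfl]; split_ifs <;> ring
      · intro j _ hji
        rw [if_neg (Ne.symm hji), zero_mul, mul_zero]
      · intro hi; exact absurd (Finset.mem_univ i) hi
    rw [Finset.sum_congr rfl (fun i _ => h1 i)]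
    rw [Fin.sum_univ_succ, Fin.sum_univ_castSucc]
    have hmid : ∀ i : Fin m,
        (if ((i.castSucc.succ : Fin (m+2)):ℕ) = 0 then e else if ((i.castSucc.succ : Fin (m+2)):ℕ) = m+1 then f else 0) * x i.castSucc.succ ^ 2 = 0 := by
      intro i
      rw [if_neg (by simp), if_neg (by simp only [Fin.val_succ, Fin.coe_castSucc]; omega), zero_mul]
    rw [Finset.sum_congr rfl (fun i _ => hmid i), Finset.sum_const_zero]
    have hlast_eq : (Fin.last m).succ = Fin.last (m+1) := by simp [Fin.ext_iff]
    rw [hlast_eq]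
    simp only [Fin.val_zero, Fin.val_last, if_true, eq_self_iff_true]
    rw [if_neg (by omega : ¬ (m + 1 = 0))]
    simp
  have hU : ∑ i : Fin (m+2), ∑ j : Fin (m+2),
      x i * ((if (i:ℕ)+1 = (j:ℕ) then (1:ℝ) else 0) * x j)
      = ∑ k : Fin (m+1), x k.castSucc * x k.succ := by
    rw [Fin.sum_univ_castSucc]
    have hlast : ∑ j : Fin (m+2),
        x (Fin.last (m+1)) * ((if ((Fin.last (m+1) : Fin (m+2)):ℕ)+1 = (j:ℕ) then (1:ℝ) else 0) * x j) = 0 := by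
      apply Finset.sum_eq_zero
      intro j _
      rw [if_neg (by have := j.isLt; simp [Fin.last]; omega), zero_mul, mul_zero]
    rw [hlast, add_zero]
    apply Finset.sum_congr rfl
    intro k _
    rw [Finset.sum_eq_single k.succ]
    · rw [if_pos (by simp), one_mul]
    · intro j _ hj
      rw [if_neg (fun hc => hj (by simp [Fin.ext_iff] at hc ⊢; omega)), zero_mul, mul_zero]
    · intro hi; exact absurd (Finset.mem_univ _) hi
  have hL : ∑ i : Fin (m+2), ∑ j : Fin (m+2),
      x i * ((if (j:ℕ)+1 = (i:ℕ) then (1:ℝ) else 0) * x j)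
      = ∑ k : Fin (m+1), x k.castSucc * x k.succ := by
    rw [Finset.sum_comm]
    rw [Fin.sum_univ_castSucc]
    have hlast : ∑ i : Fin (m+2),
        x i * ((if ((Fin.last (m+1) : Fin (m+2)):ℕ)+1 = (i:ℕ) then (1:ℝ) else 0) * x (Fin.last (m+1))) = 0 := by
      apply Finset.sum_eq_zero
      intro i _
      rw [if_neg (by have := i.isLt; simp [Fin.last]; omega), zero_mul, mul_zero]
    rw [hlast, add_zero]
    apply Finset.sum_congr rfl
    intro k _
    rw [Finset.sum_eq_single k.succ]
    · rw [if_pos (by simp), one_mul]; ring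
    · intro i _ hi
      rw [if_neg (fun hc => hi (by simp [Fin.ext_iff] at hc ⊢; omega)), zero_mul, mul_zero]
    · intro hi; exact absurd (Finset.mem_univ _) hi
  calc x ⬝ᵥ (Ttri (m+2) e f).mulVec x
      = ∑ i : Fin (m+2), ∑ j : Fin (m+2), x i * (Ttri (m+2) e f i j * x j) := by
        simp [dotProduct, mulVec, Finset.mul_sum]
    _ = (∑ i : Fin (m+2), ∑ j : Fin (m+2),
          x i * ((if i = j then (if (i:ℕ) = 0 then e else if (i:ℕ) = m+1 then f else 0) else 0) * x j))
        + (∑ i : Fin (m+2), ∑ j : Fin (m+2), x i * ((if (i:ℕ)+1 = (j:ℕ) then (1:ℝ) else 0) * x j))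
        + (∑ i : Fin (m+2), ∑ j : Fin (m+2), x i * ((if (j:ℕ)+1 = (i:ℕ) then (1:ℝ) else 0) * x j)) := by
        rw [← Finset.sum_add_distrib, ← Finset.sum_add_distrib]
        apply Finset.sum_congr rfl; intro i _
        rw [← Finset.sum_add_distrib, ← Finset.sum_add_distrib]
        apply Finset.sum_congr rfl; intro j _
        rw [Ttri_decomp]; ring
    _ = e * x 0 ^ 2 + f * x (Fin.last (m+1)) ^ 2 + 2 * ∑ i : Fin (m+1), x i.castSucc * x i.succ := by
        rw [hD, hU, hL]; ring

lemma quad_bounds (m : ℕ) (e f : ℝ) (x : Fin (m+2) → ℝ) :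
    (1-e) * x 0 ^ 2 + (1-f) * x (Fin.last (m+1)) ^ 2
        ≤ 2 * (∑ i, x i ^ 2) - x ⬝ᵥ (Ttri (m+2) e f).mulVec x ∧
    (1+e) * x 0 ^ 2 + (1+f) * x (Fin.last (m+1)) ^ 2
        ≤ 2 * (∑ i, x i ^ 2) + x ⬝ᵥ (Ttri (m+2) e f).mulVec x := by
  rw [quad_eq]
  have hc : ∑ i : Fin (m+1), x i.castSucc ^ 2
      = (∑ i : Fin (m+2), x i ^ 2) - x (Fin.last (m+1)) ^ 2 := by
    rw [Fin.sum_univ_castSucc (f := fun i : Fin (m+2) => x i ^ 2)]; ring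
  have hs : ∑ i : Fin (m+1), x i.succ ^ 2
      = (∑ i : Fin (m+2), x i ^ 2) - x 0 ^ 2 := by
    rw [Fin.sum_univ_succ (f := fun i : Fin (m+2) => x i ^ 2)]; ring
  have h1 : (0:ℝ) ≤ ∑ i : Fin (m+1), (x i.castSucc - x i.succ) ^ 2 :=
    Finset.sum_nonneg fun _ _ => sq_nonneg _
  have h2 : (0:ℝ) ≤ ∑ i : Fin (m+1), (x i.castSucc + x i.succ) ^ 2 :=
    Finset.sum_nonneg fun _ _ => sq_nonneg _
  have e1 : ∑ i : Fin (m+1), (x i.castSucc - x i.succ) ^ 2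
      = (∑ i : Fin (m+1), x i.castSucc ^ 2) - 2 * (∑ i : Fin (m+1), x i.castSucc * x i.succ)
        + ∑ i : Fin (m+1), x i.succ ^ 2 := by
    rw [Finset.mul_sum, ← Finset.sum_sub_distrib, ← Finset.sum_add_distrib]
    exact Finset.sum_congr rfl fun i _ => by ring
  have e2 : ∑ i : Fin (m+1), (x i.castSucc + x i.succ) ^ 2
      = (∑ i : Fin (m+1), x i.castSucc ^ 2) + 2 * (∑ i : Fin (m+1), x i.castSucc * x i.succ)
        + ∑ i : Fin (m+1), x i.succ ^ 2 := by
    rw [Finset.mul_sum, ← Finset.sum_add_distrib, ← Finset.sum_add_distrib]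
    exact Finset.sum_congr rfl fun i _ => by ring
  rw [hc, hs] at e1 e2
  constructor <;> nlinarith [h1, h2, e1, e2]

lemma core {N : ℕ} (A : Matrix (Fin N) (Fin N) ℝ) (hA : A.IsHermitian) (i0 : Fin N) (g : ℝ)
    (hq : ∀ x : Fin N → ℝ,
      (1 - g) * x i0 ^ 2 ≤ 2 * (∑ i, x i ^ 2) - x ⬝ᵥ A.mulVec x ∧
      (1 + g) * x i0 ^ 2 ≤ 2 * (∑ i, x i ^ 2) + x ⬝ᵥ A.mulVec x) :
    {k : Fin N | hA.eigenvalues k ∉ Set.Icc (-2 : ℝ) 2}.Subsingleton := by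
  intro k₁ hk₁ k₂ hk₂
  by_contra hne
  simp only [Set.mem_setOf_eq, Set.mem_Icc, not_and_or, not_le] at hk₁ hk₂
  set u : Fin N → ℝ := ⇑(hA.eigenvectorBasis k₁) with hu
  set v : Fin N → ℝ := ⇑(hA.eigenvectorBasis k₂) with hv
  set lam := hA.eigenvalues k₁ with hlam
  set mu := hA.eigenvalues k₂ with hmu
  have hue : A.mulVec u = lam • u := hA.mulVec_eigenvectorBasis k₁
  have hve : A.mulVec v = mu • v := hA.mulVec_eigenvectorBasis k₂
  have horth := orthonormal_iff_ite.mp hA.eigenvectorBasis.orthonormal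
  have hinner : ∀ j k : Fin N,
      (∑ i, (hA.eigenvectorBasis j) i * (hA.eigenvectorBasis k) i)
        = if j = k then (1:ℝ) else 0 := by
    intro j k
    have := horth j k
    rw [PiLp.inner_apply] at this
    simpa only [RCLike.inner_apply', conj_trivial] using this
    -- real inner: conj trivial
  have huu : ∑ i, u i ^ 2 = 1 := by
    have := hinner k₁ k₁
    rw [if_pos rfl] at this
    rw [← this]
    exact Finset.sum_congr rfl fun i _ => by rw [sq]
  have hvv : ∑ i, v i ^ 2 = 1 := by
    have := hinner k₂ k₂
    rw [if_pos rfl] at this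
    rw [← this]
    exact Finset.sum_congr rfl fun i _ => by rw [sq]
  have huv : ∑ i, u i * v i = 0 := by
    have := hinner k₁ k₂
    rwa [if_neg hne] at this
  have hQu : u ⬝ᵥ A.mulVec u = lam := by
    rw [hue]
    calc u ⬝ᵥ (lam • u) = lam * ∑ i, u i ^ 2 := by
          rw [Finset.mul_sum]
          exact Finset.sum_congr rfl fun i _ => by
            simp [dotProduct, Pi.smul_apply, smul_eq_mul]; ring
      _ = lam := by rw [huu, mul_one]
  have hQv : v ⬝ᵥ A.mulVec v = mu := by
    rw [hve]
    calc v ⬝ᵥ (mu • v) = mu * ∑ i, v i ^ 2 := by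
          rw [Finset.mul_sum]
          exact Finset.sum_congr rfl fun i _ => by
            simp [dotProduct, Pi.smul_apply, smul_eq_mul]; ring
      _ = mu := by rw [hvv, mul_one]
  -- combination facts
  have hcomb : ∀ a b : ℝ,
      (∑ i, (a * u i + b * v i) ^ 2) = a ^ 2 + b ^ 2 ∧
      ((fun i => a * u i + b * v i) ⬝ᵥ A.mulVec (fun i => a * u i + b * v i))
        = lam * a ^ 2 + mu * b ^ 2 := by
    intro a b
    have hx : (fun i => a * u i + b * v i) = a • u + b • v := by
      funext i; simp [Pi.smul_apply, smul_eq_mul]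
    constructor
    · have : ∀ i : Fin N, (a * u i + b * v i) ^ 2
          = a ^ 2 * u i ^ 2 + b ^ 2 * v i ^ 2 + (2 * a * b) * (u i * v i) := fun i => by ring
      rw [Finset.sum_congr rfl fun i _ => this i]
      rw [Finset.sum_add_distrib, Finset.sum_add_distrib, ← Finset.mul_sum, ← Finset.mul_sum,
        ← Finset.mul_sum, huu, hvv, huv]
      ring
    · rw [hx, mulVec_add, mulVec_smul, mulVec_smul, hue, hve]
      have : (a • u + b • v) ⬝ᵥ (a • lam • u + b • mu • v)
          = ∑ i, ((a * lam * a) * (u i * u i) + (a * mu * b) * (u i * v i)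
              + (b * lam * a) * (u i * v i) + (b * mu * b) * (v i * v i)) := by
        simp only [dotProduct, Pi.add_apply, Pi.smul_apply, smul_eq_mul]
        exact Finset.sum_congr rfl fun i _ => by ring
      rw [this, Finset.sum_add_distrib, Finset.sum_add_distrib, Finset.sum_add_distrib,
        ← Finset.mul_sum, ← Finset.mul_sum, ← Finset.mul_sum, ← Finset.mul_sum, huv]
      have huu' : ∑ i, u i * u i = 1 := by rw [← huu]; exact Finset.sum_congr rfl fun i _ => (sq (u i)).symm
      have hvv' : ∑ i, v i * v i = 1 := by rw [← hvv]; exact Finset.sum_congr rfl fun i _ => (sq (v i)).symm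
      rw [huu', hvv']
      ring
  have hqu1 : (1 - g) * u i0 ^ 2 ≤ 2 - lam := by
    have := (hq u).1; rw [huu, hQu] at this; linarith
  have hqu2 : (1 + g) * u i0 ^ 2 ≤ 2 + lam := by
    have := (hq u).2; rw [huu, hQu] at this; linarith
  have hqv1 : (1 - g) * v i0 ^ 2 ≤ 2 - mu := by
    have := (hq v).1; rw [hvv, hQv] at this; linarith
  have hqv2 : (1 + g) * v i0 ^ 2 ≤ 2 + mu := by
    have := (hq v).2; rw [hvv, hQv] at this; linarith
  -- pair combination with zero i0 coordinate
  set a := v i0 with ha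
  set b := -(u i0) with hb
  have hx0 : a * u i0 + b * v i0 = 0 := by rw [ha, hb]; ring
  obtain ⟨hS, hQ⟩ := hcomb a b
  have hp1 := (hq (fun i => a * u i + b * v i)).1
  have hp2 := (hq (fun i => a * u i + b * v i)).2
  rw [hS, hQ] at hp1 hp2
  rw [hx0] at hp1 hp2
  norm_num at hp1 hp2
  clear hq hcomb hue hve horth hinner hQu hQv huu hvv huv hS hQ
  clear_value u v lam mu
  clear hu hv hlam hmu
  rcases hk₁ with h₁ | h₁ <;> rcases hk₂ with h₂ | h₂
  · -- lam < -2, mu < -2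
    have hu0 : u i0 ≠ 0 := by
      intro h0; rw [h0] at hqu2; simp at hqu2; linarith
    have hbne : b ≠ 0 := by rw [hb]; exact neg_ne_zero.mpr hu0
    have hb2 : 0 < b ^ 2 := lt_of_le_of_ne (sq_nonneg b) (Ne.symm (pow_ne_zero 2 hbne))
    nlinarith [mul_nonneg (by linarith : (0:ℝ) ≤ -2 - lam) (sq_nonneg a),
      mul_pos (by linarith : (0:ℝ) < -2 - mu) hb2]
  · -- lam < -2, 2 < mu : mixed
    have hg1 : 1 + g < 0 := by nlinarith [sq_nonneg (u i0)]
    have hg2 : 1 - g < 0 := by nlinarith [sq_nonneg (v i0)]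
    linarith
  · -- 2 < lam, mu < -2 : mixed
    have hg1 : 1 - g < 0 := by nlinarith [sq_nonneg (u i0)]
    have hg2 : 1 + g < 0 := by nlinarith [sq_nonneg (v i0)]
    linarith
  · -- 2 < lam, 2 < mu
    have hu0 : u i0 ≠ 0 := by
      intro h0; rw [h0] at hqu1; simp at hqu1; linarith
    have hbne : b ≠ 0 := by rw [hb]; exact neg_ne_zero.mpr hu0
    have hb2 : 0 < b ^ 2 := lt_of_le_of_ne (sq_nonneg b) (Ne.symm (pow_ne_zero 2 hbne))
    nlinarith [mul_nonneg (by linarith : (0:ℝ) ≤ lam - 2) (sq_nonneg a),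
      mul_pos (by linarith : (0:ℝ) < mu - 2) hb2]

/-- If `|ε| ≤ 1 < |φ|` or `|φ| ≤ 1 < |ε|`, then at least `n - 1` of the `n`
eigenvalues of `T_{n,ε,φ}` (counted with multiplicity, i.e. as the list of
eigenvalues of the Hermitian matrix) lie in `[-2, 2]`; equivalently, at most one
lies outside `[-2, 2]`. -/
theorem stmt4 (n : ℕ) (hn : 2 ≤ n) (e f : ℝ)
    (h : (|e| ≤ 1 ∧ 1 < |f|) ∨ (|f| ≤ 1 ∧ 1 < |e|))
    (hH : (Ttri n e f).IsHermitian) :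
    n - 1 ≤ {k : Fin n | hH.eigenvalues k ∈ Set.Icc (-2 : ℝ) 2}.ncard ∧
    {k : Fin n | hH.eigenvalues k ∉ Set.Icc (-2 : ℝ) 2}.ncard ≤ 1 := by
  obtain ⟨m, rfl⟩ : ∃ m, n = m + 2 := ⟨n - 2, by omega⟩
  have hsub : {k : Fin (m+2) | hH.eigenvalues k ∉ Set.Icc (-2:ℝ) 2}.Subsingleton := by
    rcases h with ⟨he, -⟩ | ⟨hf, -⟩
    · obtain ⟨he1, he2⟩ := abs_le.mp he
      apply core _ hH (Fin.last (m+1)) f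
      intro x
      obtain ⟨hb1, hb2⟩ := quad_bounds m e f x
      have k1 : 0 ≤ (1 - e) * x 0 ^ 2 := mul_nonneg (by linarith) (sq_nonneg _)
      have k2 : 0 ≤ (1 + e) * x 0 ^ 2 := mul_nonneg (by linarith) (sq_nonneg _)
      exact ⟨by linarith, by linarith⟩
    · obtain ⟨hf1, hf2⟩ := abs_le.mp hf
      apply core _ hH 0 e
      intro x
      obtain ⟨hb1, hb2⟩ := quad_bounds m e f x
      have k1 : 0 ≤ (1 - f) * x (Fin.last (m+1)) ^ 2 := mul_nonneg (by linarith) (sq_nonneg _)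
      have k2 : 0 ≤ (1 + f) * x (Fin.last (m+1)) ^ 2 := mul_nonneg (by linarith) (sq_nonneg _)
      exact ⟨by linarith, by linarith⟩
  have h1 : {k : Fin (m+2) | hH.eigenvalues k ∉ Set.Icc (-2:ℝ) 2}.ncard ≤ 1 := by
    rw [Set.ncard_le_one (Set.toFinite _)]
    exact fun a ha b hb => hsub ha hb
  refine ⟨?_, h1⟩
  have hcompl : {k : Fin (m+2) | hH.eigenvalues k ∈ Set.Icc (-2:ℝ) 2}
      = {k : Fin (m+2) | hH.eigenvalues k ∉ Set.Icc (-2:ℝ) 2}ᶜ := by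
    ext k; simp
  have hsum := Set.ncard_add_ncard_compl
    {k : Fin (m+2) | hH.eigenvalues k ∉ Set.Icc (-2:ℝ) 2}
  have hcard : Nat.card (Fin (m+2)) = m + 2 := by simp
  rw [hcompl]
  omega
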